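/- Let S be a finite set of points in the plane in general position, and suppose S contains a crossing family of size k (a set of k segments with endpoints in S, any two of which cross). Then there exist k pairwise edge-disjoint plane spanning trees of S. -/

import Mathlib

/-- Points in the plane. -/
abbrev Pt : Type := ℝ × ℝ

/-- A finite point set is in general position if no three of its points are collinear. -/
def GenPos (S : Finset Pt) : Prop :=
  ∀ p ∈ S, ∀ q ∈ S, ∀ r ∈ S, p ≠ q → p ≠ r → q ≠ r →
    ¬ Collinear ℝ ({p, q, r} : Set Pt)

/-- A geometric graph on `S` (a simple graph on the points of `S`, edges drawn as
straight segments) is plane if the open segments of any two distinct edges are disjoint. -/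
def IsPlaneGraph {S : Finset Pt} (G : SimpleGraph {x // x ∈ S}) : Prop :=
  ∀ a b c d : {x // x ∈ S}, G.Adj a b → G.Adj c d → s(a, b) ≠ s(c, d) →
    openSegment ℝ (a : Pt) (b : Pt) ∩ openSegment ℝ (c : Pt) (d : Pt) = ∅

/-- A plane spanning tree of `S`: a tree on all points of `S` drawn without crossings. -/
def IsPlaneSpanningTree {S : Finset Pt} (G : SimpleGraph {x // x ∈ S}) : Prop :=
  G.IsTree ∧ IsPlaneGraph G

/-- A plane spanning path of `S`: a plane spanning tree in which every vertex
has degree at most two (i.e. a plane Hamiltonian path). -/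
def IsPlaneSpanningPath {S : Finset Pt} (G : SimpleGraph {x // x ∈ S}) : Prop :=
  IsPlaneSpanningTree G ∧
    ∀ v a b c : {x // x ∈ S}, G.Adj v a → G.Adj v b → G.Adj v c →
      (a = b ∨ a = c ∨ b = c)

/-- The open segment spanned by an unordered pair of points. -/
def segOpen (e : Sym2 Pt) : Set Pt :=
  Sym2.lift ⟨fun a b => openSegment ℝ a b, fun a b => openSegment_symm ℝ a b⟩ e

/-- `F` is a crossing family in `S`: a set of nondegenerate segments with endpoints
in `S`, any two of which cross (their open segments intersect). -/
def IsCrossingFamily (S : Finset Pt) (F : Finset (Sym2 Pt)) : Prop :=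
  (∀ e ∈ F, ¬ e.IsDiag ∧ ∀ x ∈ e, x ∈ S) ∧
  (∀ e ∈ F, ∀ f ∈ F, e ≠ f → (segOpen e ∩ segOpen f).Nonempty)

/-- `x` lies strictly to the left of the directed line from `p` to `q`. -/
def leftOf (p q x : Pt) : Prop :=
  0 < (q.1 - p.1) * (x.2 - p.2) - (q.2 - p.2) * (x.1 - p.1)

/-- `x` lies strictly to the right of the directed line from `p` to `q`. -/
def rightOf (p q x : Pt) : Prop :=
  (q.1 - p.1) * (x.2 - p.2) - (q.2 - p.2) * (x.1 - p.1) < 0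

/-- The double star on `S` associated with the directed edge `pq`: the edge `pq`,
the edges from `p` to all points strictly left of the directed line `pq`, and the
edges from `q` to all points strictly right of it. -/
def doubleStar (S : Finset Pt) (p q : Pt) : SimpleGraph {x // x ∈ S} :=
  SimpleGraph.fromRel fun a b =>
    ((a : Pt) = p ∧ (b : Pt) = q) ∨
    ((a : Pt) = p ∧ leftOf p q (b : Pt)) ∨
    ((a : Pt) = q ∧ rightOf p q (b : Pt))

/-- The regular wheel configuration `W_{2n}`: `2n-1` points regularly spaced on the
unit circle together with its center. -/
noncomputable def wheel (n : ℕ) : Finset Pt :=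
  insert ((0 : ℝ), (0 : ℝ)) <| (Finset.range (2 * n - 1)).image fun j : ℕ =>
    (Real.cos (2 * Real.pi * (j : ℝ) / ((2 * n - 1 : ℕ) : ℝ)),
     Real.sin (2 * Real.pi * (j : ℝ) / ((2 * n - 1 : ℕ) : ℝ)))

namespace CFTaux

def cr (p q x : Pt) : ℝ := (q.1 - p.1) * (x.2 - p.2) - (q.2 - p.2) * (x.1 - p.1)

lemma cr_self_left (p q : Pt) : cr p q p = 0 := by simp [cr]

lemma cr_self_right (p q : Pt) : cr p q q = 0 := by simp only [cr]; ring

lemma seg_mem {a b x : Pt} (h : x ∈ openSegment ℝ a b) :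
    ∃ t : ℝ, 0 < t ∧ t < 1 ∧ x.1 = (1-t)*a.1 + t*b.1 ∧ x.2 = (1-t)*a.2 + t*b.2 := by
  rw [openSegment_eq_image] at h
  obtain ⟨t, ht, rfl⟩ := h
  exact ⟨t, ht.1, ht.2, by simp, by simp⟩

lemma cr_seg (p q : Pt) {a b x : Pt} (h : x ∈ openSegment ℝ a b) :
    ∃ t : ℝ, 0 < t ∧ t < 1 ∧ cr p q x = (1-t) * cr p q a + t * cr p q b := by
  obtain ⟨t, h0, h1, hx1, hx2⟩ := seg_mem h
  exact ⟨t, h0, h1, by simp only [cr, hx1, hx2]; ring⟩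

lemma collinear_of_cr {p q r : Pt} (h : cr p q r = 0) : Collinear ℝ ({p, q, r} : Set Pt) := by
  rcases eq_or_ne q p with hqp | hqp
  · have e : ({p, q, r} : Set Pt) = {p, r} := by rw [hqp]; simp [Set.insert_comm]
    rw [e]; exact collinear_pair ℝ p r
  apply (collinear_iff_of_mem (Set.mem_insert p {q, r})).2
  refine ⟨q - p, fun x hx => ?_⟩
  have comp : ∀ c : ℝ, x.1 = c * (q.1 - p.1) + p.1 → x.2 = c * (q.2 - p.2) + p.2 →
      ∃ c' : ℝ, x = c' • (q - p) +ᵥ p := by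
    intro c h1 h2
    refine ⟨c, ?_⟩
    have e : c • (q - p) +ᵥ p = (c * (q.1 - p.1) + p.1, c * (q.2 - p.2) + p.2) := rfl
    rw [e, Prod.ext_iff]
    exact ⟨h1, h2⟩
  simp only [Set.mem_insert_iff, Set.mem_singleton_iff] at hx
  simp only [cr] at h
  rcases hx with rfl | rfl | rfl
  · exact comp 0 (by ring) (by ring)
  · exact comp 1 (by ring) (by ring)
  · rcases eq_or_ne q.1 p.1 with h1 | h1
    · have h2 : q.2 - p.2 ≠ 0 := fun h2 => hqp (Prod.ext_iff.mpr ⟨h1, by linarith⟩)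
      have h0 : (q.2 - p.2) * (x.1 - p.1) = 0 := by linear_combination (x.2 - p.2) * h1 - h
      have hx1 : x.1 = p.1 := by
        rcases mul_eq_zero.mp h0 with hc | hc
        · exact absurd hc h2
        · linarith
      refine comp ((x.2 - p.2)/(q.2 - p.2)) ?_ ?_
      · rw [h1]; ring_nf; linarith
      · field_simp; ring
    · have h1' : q.1 - p.1 ≠ 0 := sub_ne_zero.mpr h1
      refine comp ((x.1 - p.1)/(q.1 - p.1)) ?_ ?_
      · field_simp; ring
      · field_simp
        linear_combination h

lemma disj_apex {p a b : Pt} (h : cr p a b ≠ 0) :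
    openSegment ℝ p a ∩ openSegment ℝ p b = ∅ := by
  rw [Set.eq_empty_iff_forall_notMem]
  rintro x ⟨hx1, hx2⟩
  obtain ⟨s, hs0, hs1, e1, e2⟩ := seg_mem hx1
  obtain ⟨t, ht0, ht1, f1, f2⟩ := seg_mem hx2
  apply h
  have key : (s*t) * cr p a b = 0 := by
    simp only [cr]
    linear_combination (t*(b.2-p.2)) * (e1.symm.trans f1) - (t*(b.1-p.1)) * (e2.symm.trans f2)
  rcases mul_eq_zero.mp key with hc | hc
  · nlinarith
  · exact hc

def dd (p q p' q' : Pt) : ℝ := (q.1-p.1)*(q'.2-p'.2) - (q.2-p.2)*(q'.1-p'.1)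

lemma dd_swap (p q p' q' : Pt) : dd p' q' p q = - dd p q p' q' := by simp only [dd]; ring

lemma key1 {p q p' q' x : Pt} (h : x ∈ openSegment ℝ p q) (h' : x ∈ openSegment ℝ p' q') :
    ∃ t : ℝ, 0 < t ∧ t < 1 ∧ cr p q p' = -(t * dd p q p' q') ∧
      cr p q q' = (1-t) * dd p q p' q' := by
  obtain ⟨s, hs0, hs1, e1, e2⟩ := seg_mem h
  obtain ⟨t, ht0, ht1, f1, f2⟩ := seg_mem h'
  have E1 : (1-s)*p.1 + s*q.1 = (1-t)*p'.1 + t*q'.1 := e1.symm.trans f1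
  have E2 : (1-s)*p.2 + s*q.2 = (1-t)*p'.2 + t*q'.2 := e2.symm.trans f2
  refine ⟨t, ht0, ht1, ?_, ?_⟩
  · simp only [cr, dd]
    linear_combination (q.2-p.2) * E1 - (q.1-p.1) * E2
  · simp only [cr, dd]
    linear_combination (q.2-p.2) * E1 - (q.1-p.1) * E2

lemma cycle_two_nbrs {V : Type*} {G : SimpleGraph V} {v : V} (c : G.Walk v v) (hc : c.IsCycle) :
    ∃ a b, a ≠ b ∧ G.Adj v a ∧ G.Adj v b := by
  cases c with
  | nil => exact absurd rfl hc.ne_nil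
  | @cons _ u _ h q =>
    have hlen : 3 ≤ q.length + 1 := by
      have := hc.three_le_length
      simpa using this
    have hnn : ¬ q.reverse.Nil := by
      rw [SimpleGraph.Walk.not_nil_iff_lt_length, SimpleGraph.Walk.length_reverse]
      omega
    obtain ⟨w, h2, q2, hq2⟩ := SimpleGraph.Walk.not_nil_iff.mp hnn
    refine ⟨u, w, ?_, h, h2⟩
    rintro rfl
    have hmem : s(v, u) ∈ q.edges := by
      have : s(v, u) ∈ q.reverse.edges := by
        rw [hq2]
        simp
      rwa [SimpleGraph.Walk.edges_reverse, List.mem_reverse] at this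
    have hnd := hc.edges_nodup
    rw [SimpleGraph.Walk.edges_cons] at hnd
    exact (List.nodup_cons.mp hnd).1 hmem
def R (p q : Pt) (u v : Pt) : Prop :=
  (u = p ∧ v = q) ∨ (u = p ∧ 0 < cr p q v) ∨ (u = q ∧ cr p q v < 0)

section DS
variable {S : Finset Pt} {p q : Pt}

lemma ds_adj {a b : {x // x ∈ S}} :
    (doubleStar S p q).Adj a b ↔ a ≠ b ∧ (R p q a.1 b.1 ∨ R p q b.1 a.1) := by
  simp only [doubleStar, SimpleGraph.fromRel_adj, R, leftOf, rightOf, cr]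

lemma ds_conn (hgp : GenPos S) (hp : p ∈ S) (hq : q ∈ S) (hpq : p ≠ q) :
    (doubleStar S p q).Connected := by
  rw [SimpleGraph.connected_iff_exists_forall_reachable]
  refine ⟨⟨p, hp⟩, fun w => ?_⟩
  by_cases hwp : w.1 = p
  · rw [show w = ⟨p, hp⟩ from Subtype.ext hwp]
  by_cases hwq : w.1 = q
  · have h1 : (doubleStar S p q).Adj ⟨p, hp⟩ w :=
      ds_adj.mpr ⟨fun h => hwp (congrArg Subtype.val h).symm, Or.inl (Or.inl ⟨rfl, hwq⟩)⟩
    exact h1.reachable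
  have hcr : cr p q w.1 ≠ 0 := fun h0 =>
    hgp p hp q hq w.1 w.2 hpq (fun h => hwp h.symm) (fun h => hwq h.symm) (collinear_of_cr h0)
  rcases lt_or_gt_of_ne hcr with hneg | hpos
  · have h1 : (doubleStar S p q).Adj ⟨q, hq⟩ w :=
      ds_adj.mpr ⟨fun h => hwq (congrArg Subtype.val h).symm,
        Or.inl (Or.inr (Or.inr ⟨rfl, hneg⟩))⟩
    have h2 : (doubleStar S p q).Adj ⟨p, hp⟩ ⟨q, hq⟩ :=
      ds_adj.mpr ⟨fun h => hpq (congrArg Subtype.val h), Or.inl (Or.inl ⟨rfl, rfl⟩)⟩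
    exact h2.reachable.trans h1.reachable
  · have h1 : (doubleStar S p q).Adj ⟨p, hp⟩ w :=
      ds_adj.mpr ⟨fun h => hwp (congrArg Subtype.val h).symm, Or.inl (Or.inr (Or.inl ⟨rfl, hpos⟩))⟩
    exact h1.reachable

lemma ds_nbr (hgp : GenPos S) {v a : {x // x ∈ S}} (hvp : v.1 ≠ p) (hvq : v.1 ≠ q)
    (ha : (doubleStar S p q).Adj v a) :
    (a.1 = p ∧ 0 < cr p q v.1) ∨ (a.1 = q ∧ cr p q v.1 < 0) := by
  obtain ⟨hne, h | h⟩ := ds_adj.mp ha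
  · rcases h with ⟨h1, _⟩ | ⟨h1, _⟩ | ⟨h1, _⟩
    exacts [absurd h1 hvp, absurd h1 hvp, absurd h1 hvq]
  · rcases h with ⟨h1, h2⟩ | ⟨h1, h2⟩ | ⟨h1, h2⟩
    exacts [absurd h2 hvq, Or.inl ⟨h1, h2⟩, Or.inr ⟨h1, h2⟩]

lemma ds_acyclic (hgp : GenPos S) (hp : p ∈ S) (hq : q ∈ S) :
    (doubleStar S p q).IsAcyclic := by
  intro v c hc
  have hnd := hc.support_nodup
  have hlen : c.support.tail.length = c.length := by
    have := SimpleGraph.Walk.length_support c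
    have : c.support.tail.length + 1 = c.support.length := by
      rw [SimpleGraph.Walk.support_eq_cons c]; simp
    omega
  have h3 := hc.three_le_length
  have hex : ∃ w ∈ c.support.tail, w.1 ≠ p ∧ w.1 ≠ q := by
    by_contra hcon
    push_neg at hcon
    have hsub : c.support.tail.toFinset ⊆ {⟨p, hp⟩, ⟨q, hq⟩} := by
      intro x hx
      rw [List.mem_toFinset] at hx
      by_cases hxp : x.1 = p
      · exact Finset.mem_insert.mpr (Or.inl (Subtype.ext hxp))
      · exact Finset.mem_insert.mpr (Or.inr (Finset.mem_singleton.mpr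
          (Subtype.ext (hcon x hx hxp))))
    have hcard := Finset.card_le_card hsub
    rw [List.toFinset_card_of_nodup hnd] at hcard
    have h2 : ({⟨p, hp⟩, ⟨q, hq⟩} : Finset {x // x ∈ S}).card ≤ 2 := by
      apply le_trans (Finset.card_insert_le _ _)
      simp
    omega
  obtain ⟨w, hw, hwp, hwq⟩ := hex
  have hw' : w ∈ c.support := List.mem_of_mem_tail hw
  obtain ⟨a, b, hab, ha, hb⟩ := cycle_two_nbrs _ (hc.rotate hw')
  rcases ds_nbr hgp hwp hwq ha with ⟨h1, h2⟩ | ⟨h1, h2⟩ <;>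
    rcases ds_nbr hgp hwp hwq hb with ⟨g1, g2⟩ | ⟨g1, g2⟩
  · exact hab (Subtype.ext (h1.trans g1.symm))
  · linarith
  · linarith
  · exact hab (Subtype.ext (h1.trans g1.symm))


lemma seg_sign_zero {p q a b : Pt} (ha : cr p q a = 0) (hb : cr p q b = 0) {x : Pt}
    (hx : x ∈ openSegment ℝ a b) : cr p q x = 0 := by
  obtain ⟨t, h0, h1, hv⟩ := cr_seg p q hx
  rw [ha, hb] at hv
  linarith [hv]

lemma seg_sign_pos {p q a b : Pt} (ha : cr p q a = 0) (hb : 0 < cr p q b) {x : Pt}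
    (hx : x ∈ openSegment ℝ a b) : 0 < cr p q x := by
  obtain ⟨t, h0, h1, hv⟩ := cr_seg p q hx
  rw [ha] at hv
  nlinarith

lemma seg_sign_neg {p q a b : Pt} (ha : cr p q a = 0) (hb : cr p q b < 0) {x : Pt}
    (hx : x ∈ openSegment ℝ a b) : cr p q x < 0 := by
  obtain ⟨t, h0, h1, hv⟩ := cr_seg p q hx
  rw [ha] at hv
  nlinarith

lemma ds_edge_repr {a b : {x // x ∈ S}} (h : (doubleStar S p q).Adj a b) :
    ∃ u v : Pt, u ∈ S ∧ v ∈ S ∧ s(u, v) = s(a.1, b.1) ∧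
      openSegment ℝ u v = openSegment ℝ a.1 b.1 ∧ R p q u v := by
  obtain ⟨hne, h | h⟩ := ds_adj.mp h
  · exact ⟨a.1, b.1, a.2, b.2, rfl, rfl, h⟩
  · exact ⟨b.1, a.1, b.2, a.2, Sym2.eq_swap, openSegment_symm ℝ b.1 a.1, h⟩

lemma sym2_val_ne {a b c d : {x // x ∈ S}} (h : s(a, b) ≠ s(c, d)) :
    s(a.1, b.1) ≠ s(c.1, d.1) := by
  intro he
  apply h
  rcases Sym2.eq_iff.mp he with ⟨h1, h2⟩ | ⟨h1, h2⟩
  · rw [Subtype.ext h1, Subtype.ext h2]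
  · rw [Subtype.ext h1, Subtype.ext h2, Sym2.eq_swap]

lemma ds_plane (hgp : GenPos S) (hp : p ∈ S) (hq : q ∈ S) :
    IsPlaneGraph (doubleStar S p q) := by
  intro a b c d hab hcd hne
  obtain ⟨u, v, hu, hv, hs, hseg, hR⟩ := ds_edge_repr hab
  obtain ⟨u', v', hu', hv', hs', hseg', hR'⟩ := ds_edge_repr hcd
  rw [← hseg, ← hseg']
  have hne' : s(u, v) ≠ s(u', v') := by rw [hs, hs']; exact sym2_val_ne hne
  have hvne : ∀ w : Pt, 0 < cr p q w → p ≠ w := by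
    rintro w hw rfl
    rw [cr_self_left] at hw; exact lt_irrefl 0 hw
  have hvne' : ∀ w : Pt, cr p q w < 0 → q ≠ w := by
    rintro w hw rfl
    rw [cr_self_right] at hw; exact lt_irrefl 0 hw
  rcases hR with ⟨hu1, hv1⟩ | ⟨hu1, hl⟩ | ⟨hu1, hr⟩ <;> subst u <;>
    [subst v; skip; skip]
  · rcases hR' with ⟨hu2, hv2⟩ | ⟨hu2, hl'⟩ | ⟨hu2, hr'⟩ <;> subst u' <;>
      [subst v'; skip; skip]
    · exact absurd rfl hne'
    · rw [Set.eq_empty_iff_forall_notMem]; rintro x ⟨hx1, hx2⟩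
      have h1 := seg_sign_zero (cr_self_left p q) (cr_self_right p q) hx1
      have h2 := seg_sign_pos (cr_self_left p q) hl' hx2
      linarith
    · rw [Set.eq_empty_iff_forall_notMem]; rintro x ⟨hx1, hx2⟩
      have h1 := seg_sign_zero (cr_self_left p q) (cr_self_right p q) hx1
      have h2 := seg_sign_neg (cr_self_right p q) hr' hx2
      linarith
  · rcases hR' with ⟨hu2, hv2⟩ | ⟨hu2, hl'⟩ | ⟨hu2, hr'⟩ <;> subst u' <;>
      [subst v'; skip; skip]
    · rw [Set.eq_empty_iff_forall_notMem]; rintro x ⟨hx1, hx2⟩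
      have h1 := seg_sign_pos (cr_self_left p q) hl hx1
      have h2 := seg_sign_zero (cr_self_left p q) (cr_self_right p q) hx2
      linarith
    · rcases eq_or_ne v v' with rfl | hvv
      · exact absurd rfl hne'
      · exact disj_apex fun h0 => hgp p hp v hv v' hv' (hvne v hl) (hvne v' hl') hvv
          (collinear_of_cr h0)
    · rw [Set.eq_empty_iff_forall_notMem]; rintro x ⟨hx1, hx2⟩
      have h1 := seg_sign_pos (cr_self_left p q) hl hx1
      have h2 := seg_sign_neg (cr_self_right p q) hr' hx2
      linarith
  · rcases hR' with ⟨hu2, hv2⟩ | ⟨hu2, hl'⟩ | ⟨hu2, hr'⟩ <;> subst u' <;>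
      [subst v'; skip; skip]
    · rw [Set.eq_empty_iff_forall_notMem]; rintro x ⟨hx1, hx2⟩
      have h1 := seg_sign_neg (cr_self_right p q) hr hx1
      have h2 := seg_sign_zero (cr_self_left p q) (cr_self_right p q) hx2
      linarith
    · rw [Set.eq_empty_iff_forall_notMem]; rintro x ⟨hx1, hx2⟩
      have h1 := seg_sign_neg (cr_self_right p q) hr hx1
      have h2 := seg_sign_pos (cr_self_left p q) hl' hx2
      linarith
    · rcases eq_or_ne v v' with rfl | hvv
      · exact absurd rfl hne'
      · refine disj_apex fun h0 => hgp q hq v hv v' hv' (hvne' v hr) (hvne' v' hr') hvv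
          (collinear_of_cr ?_)
        · show cr q v v' = 0
          exact h0
end DS

lemma ds_disjoint {S : Finset Pt} (hgp : GenPos S) {p q p' q' x : Pt}
    (hp : p ∈ S) (hq : q ∈ S) (hp' : p' ∈ S) (hq' : q' ∈ S)
    (hpq : p ≠ q) (hpq' : p' ≠ q') (hnef : s(p, q) ≠ s(p', q'))
    (hx : x ∈ openSegment ℝ p q) (hx' : x ∈ openSegment ℝ p' q') :
    Disjoint (doubleStar S p q).edgeSet (doubleStar S p' q').edgeSet := by
  obtain ⟨t, ht0, ht1, hA, hB⟩ := key1 hx hx'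
  obtain ⟨s, hs0, hs1, hC0, hD0⟩ := key1 hx' hx
  rw [dd_swap] at hC0 hD0
  set D := dd p q p' q' with hDdef
  have hC : cr p' q' p = s * D := by rw [hC0]; ring
  have hD : cr p' q' q = -((1 - s) * D) := by rw [hD0]; ring
  have hstep : ∀ r, r ∈ S → p ≠ r → q ≠ r → cr p q r = 0 → False := fun r hr h1 h2 h0 =>
    hgp p hp q hq r hr hpq h1 h2 (collinear_of_cr h0)
  have hDzp' : cr p q p' = 0 → D = 0 := by
    intro h0
    have h1 : t * D = 0 := by linarith
    exact (mul_eq_zero.mp h1).resolve_left (ne_of_gt ht0)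
  have hDzq' : cr p q q' = 0 → D = 0 := by
    intro h0
    have h1 : (1 - t) * D = 0 := by linarith
    exact (mul_eq_zero.mp h1).resolve_left (by linarith)
  have hne_pp' : p' ≠ p := by
    intro h
    have h0 : cr p q p' = 0 := by rw [h, cr_self_left]
    have hD0' := hDzp' h0
    have h0' : cr p q q' = 0 := by rw [hB, hD0']; ring
    refine hstep q' hq' ?_ ?_ h0'
    · rw [h] at hpq'; exact hpq'
    · intro hh; exact hnef (by rw [h, ← hh])
  have hne_p'q : p' ≠ q := by
    intro h
    have h0 : cr p q p' = 0 := by rw [h, cr_self_right]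
    have hD0' := hDzp' h0
    have h0' : cr p q q' = 0 := by rw [hB, hD0']; ring
    refine hstep q' hq' ?_ ?_ h0'
    · intro hh; exact hnef (by rw [h, ← hh, Sym2.eq_swap])
    · rw [h] at hpq'; exact hpq'
  have hne_q'p : q' ≠ p := by
    intro h
    have h0 : cr p q q' = 0 := by rw [h, cr_self_left]
    have hD0' := hDzq' h0
    have h0' : cr p q p' = 0 := by rw [hA, hD0']; ring
    refine hstep p' hp' ?_ ?_ h0'
    · exact fun hh => hpq' (hh.symm.trans h.symm)
    · exact fun hh => hnef (by rw [← hh, h, Sym2.eq_swap])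
  have hne_q'q : q' ≠ q := by
    intro h
    have h0 : cr p q q' = 0 := by rw [h, cr_self_right]
    have hD0' := hDzq' h0
    have h0' : cr p q p' = 0 := by rw [hA, hD0']; ring
    refine hstep p' hp' ?_ ?_ h0'
    · intro hh; exact hnef (by rw [h, ← hh])
    · exact fun hh => hpq' (hh.symm.trans h.symm)
  have sA1 : 0 < cr p q p' → D < 0 := fun h => by nlinarith
  have sA2 : cr p q p' < 0 → 0 < D := fun h => by nlinarith
  have sB1 : 0 < cr p q q' → 0 < D := fun h => by nlinarith
  have sB2 : cr p q q' < 0 → D < 0 := fun h => by nlinarith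
  have sC1 : 0 < cr p' q' p → 0 < D := fun h => by nlinarith
  have sC2 : cr p' q' p < 0 → D < 0 := fun h => by nlinarith
  have sD1 : 0 < cr p' q' q → D < 0 := fun h => by nlinarith
  have sD2 : cr p' q' q < 0 → 0 < D := fun h => by nlinarith
  rw [Set.disjoint_left]
  intro g hg1 hg2
  induction g using Sym2.ind with
  | _ a b =>
    rw [SimpleGraph.mem_edgeSet] at hg1 hg2
    obtain ⟨u, v, hu, hv, hs1', _, hR⟩ := ds_edge_repr hg1
    obtain ⟨u', v', hu', hv', hs2', _, hR'⟩ := ds_edge_repr hg2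
    have he : s(u, v) = s(u', v') := hs1'.trans hs2'.symm
    rcases Sym2.eq_iff.mp he with ⟨h1, h2⟩ | ⟨h1, h2⟩ <;>
      rcases hR with ⟨hu1, hv1⟩ | ⟨hu1, hv1⟩ | ⟨hu1, hv1⟩ <;>
        rcases hR' with ⟨hu2, hv2⟩ | ⟨hu2, hv2⟩ | ⟨hu2, hv2⟩
    -- case A : u = u', v = v'
    · exact hne_pp' (hu1.symm.trans (h1.trans hu2)).symm
    · exact hne_pp' (hu1.symm.trans (h1.trans hu2)).symm
    · exact hne_q'p (hu1.symm.trans (h1.trans hu2)).symm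
    · exact hne_pp' (hu1.symm.trans (h1.trans hu2)).symm
    · exact hne_pp' (hu1.symm.trans (h1.trans hu2)).symm
    · exact hne_q'p (hu1.symm.trans (h1.trans hu2)).symm
    · exact hne_p'q (hu1.symm.trans (h1.trans hu2)).symm
    · exact hne_p'q (hu1.symm.trans (h1.trans hu2)).symm
    · exact hne_q'q (hu1.symm.trans (h1.trans hu2)).symm
    -- case B : u = v', v = u'
    · exact hne_p'q (hv1.symm.trans (h2.trans hu2)).symm
    · exact hne_p'q (hv1.symm.trans (h2.trans hu2)).symm
    · exact hne_q'q (hv1.symm.trans (h2.trans hu2)).symm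
    · exact hne_q'p (hu1.symm.trans (h1.trans hv2)).symm
    · -- B(2,2)
      have w1 : 0 < cr p q p' := by rw [h2.trans hu2] at hv1; exact hv1
      have w2 : 0 < cr p' q' p := by rw [h1.symm.trans hu1] at hv2; exact hv2
      linarith [sA1 w1, sC1 w2]
    · -- B(2,3)
      have w1 : 0 < cr p q q' := by rw [h2.trans hu2] at hv1; exact hv1
      have w2 : cr p' q' p < 0 := by rw [h1.symm.trans hu1] at hv2; exact hv2
      linarith [sB1 w1, sC2 w2]
    · exact hne_q'q (hu1.symm.trans (h1.trans hv2)).symm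
    · -- B(3,2)
      have w1 : cr p q p' < 0 := by rw [h2.trans hu2] at hv1; exact hv1
      have w2 : 0 < cr p' q' q := by rw [h1.symm.trans hu1] at hv2; exact hv2
      linarith [sA2 w1, sD1 w2]
    · -- B(3,3)
      have w1 : cr p q q' < 0 := by rw [h2.trans hu2] at hv1; exact hv1
      have w2 : cr p' q' q < 0 := by rw [h1.symm.trans hu1] at hv2; exact hv2
      linarith [sB2 w1, sD2 w2]

end CFTaux

/-- If a point set `S` in general position contains a crossing family of
size `k`, then `S` admits `k` pairwise edge-disjoint plane spanning trees. -/
theorem crossing_family_gives_trees (S : Finset Pt) (hgp : GenPos S)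
    (k : ℕ) (F : Finset (Sym2 Pt)) (hF : IsCrossingFamily S F) (hcard : F.card = k) :
    ∃ T : Fin k → SimpleGraph {x // x ∈ S},
      (∀ i, IsPlaneSpanningTree (T i)) ∧
      (∀ i j, i ≠ j → Disjoint (T i).edgeSet (T j).edgeSet) := by
  classical
  obtain ⟨hF1, hF2⟩ := hF
  subst hcard
  have hrep : ∀ e : Sym2 Pt, ∃ z : Pt × Pt, e = s(z.1, z.2) := fun e =>
    Sym2.ind (fun x y => ⟨(x, y), rfl⟩) e
  choose rep hrepeq using hrep
  set ε : Fin F.card → Sym2 Pt := fun i => (F.equivFin.symm i).1 with hεdef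
  have hεF : ∀ i, ε i ∈ F := fun i => (F.equivFin.symm i).2
  have hεinj : Function.Injective ε := fun i j h =>
    F.equivFin.symm.injective (Subtype.ext h)
  have hmem : ∀ e ∈ F, (rep e).1 ∈ S ∧ (rep e).2 ∈ S ∧ (rep e).1 ≠ (rep e).2 := by
    intro e he
    obtain ⟨hd, hm⟩ := hF1 e he
    refine ⟨hm _ ?_, hm _ ?_, ?_⟩
    · have h1 := Sym2.mem_mk_left (rep e).1 (rep e).2
      rwa [← hrepeq e] at h1
    · have h1 := Sym2.mem_mk_right (rep e).1 (rep e).2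
      rwa [← hrepeq e] at h1
    · intro h
      apply hd
      rw [hrepeq e]
      exact Sym2.mk_isDiag_iff.mpr h
  refine ⟨fun i => doubleStar S (rep (ε i)).1 (rep (ε i)).2, fun i => ?_, fun i j hij => ?_⟩
  · obtain ⟨h1, h2, h3⟩ := hmem (ε i) (hεF i)
    exact ⟨⟨CFTaux.ds_conn hgp h1 h2 h3, CFTaux.ds_acyclic hgp h1 h2⟩,
      CFTaux.ds_plane hgp h1 h2⟩
  · obtain ⟨h1, h2, h3⟩ := hmem (ε i) (hεF i)
    obtain ⟨g1, g2, g3⟩ := hmem (ε j) (hεF j)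
    have hij' : ε i ≠ ε j := fun h => hij (hεinj h)
    obtain ⟨x, hx1, hx2⟩ := hF2 (ε i) (hεF i) (ε j) (hεF j) hij'
    rw [hrepeq (ε i)] at hx1
    rw [hrepeq (ε j)] at hx2
    simp only [segOpen, Sym2.lift_mk] at hx1 hx2
    refine CFTaux.ds_disjoint hgp h1 h2 g1 g2 h3 g3 ?_ hx1 hx2
    intro h
    exact hij' ((hrepeq (ε i)).trans (h.trans (hrepeq (ε j)).symm))
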